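/- Let (X,p) be a partial metric space, let I be a nontrivial admissible ideal of subsets of ℕ, let r ≥ 0, and let (a_n) and (b_n) be two sequences in X such that p(a_n, b_n) → 0 as n → ∞ and p(a_n, a_n) → 0 as n → ∞. If (b_n) is rough I-convergent to a point a ∈ X of roughness degree r, then (a_n) is rough I-convergent to a of roughness degree r. -/

import Mathlib

/-- A partial metric on `X` (Matthews): nonnegativity with small self-distances,
indistancy implies equality, symmetry, and the modified triangle inequality. -/
structure IsPartialMetric {X : Type*} (p : X → X → ℝ) : Prop where
  self_nonneg : ∀ x : X, 0 ≤ p x x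
  self_le : ∀ x y : X, p x x ≤ p x y
  eq_iff : ∀ x y : X, x = y ↔ (p x x = p x y ∧ p x y = p y y)
  symm : ∀ x y : X, p x y = p y x
  triangle : ∀ x y z : X, p x y ≤ p x z + p z y - p z z

/-- An ideal of subsets of `ℕ`. -/
structure IsIdeal (I : Set (Set ℕ)) : Prop where
  empty_mem : (∅ : Set ℕ) ∈ I
  union_mem : ∀ A B : Set ℕ, A ∈ I → B ∈ I → A ∪ B ∈ I
  subset_mem : ∀ A B : Set ℕ, A ∈ I → B ⊆ A → B ∈ I

/-- A nontrivial admissible ideal of subsets of `ℕ`. -/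
structure IsAdmissibleIdeal (I : Set (Set ℕ)) extends IsIdeal I : Prop where
  univ_not_mem : (Set.univ : Set ℕ) ∉ I
  ne_empty_singleton : I ≠ {∅}
  singleton_mem : ∀ n : ℕ, ({n} : Set ℕ) ∈ I

/-- `(x n)` is rough `I`-convergent to `x₀` of roughness degree `r` w.r.t. the
partial metric `p`. -/
def RoughIdealConv {X : Type*} (I : Set (Set ℕ)) (p : X → X → ℝ)
    (x : ℕ → X) (r : ℝ) (x₀ : X) : Prop :=
  ∀ ε : ℝ, 0 < ε → {n : ℕ | r + ε ≤ |p (x n) x₀ - p x₀ x₀|} ∈ I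

lemma lt_mem_ideal {I : Set (Set ℕ)} (hI : IsAdmissibleIdeal I)
    (N : ℕ) : {n : ℕ | n < N} ∈ I := by
  induction N with
  | zero => simpa using hI.empty_mem
  | succ N ih =>
    have : {n : ℕ | n < N + 1} = {n : ℕ | n < N} ∪ {N} := by
      ext n; simp [Nat.lt_succ_iff_lt_or_eq]; omega
    rw [this]
    exact hI.union_mem _ _ ih (hI.singleton_mem N)

theorem rough_ideal_conv_transfer_back
    {X : Type*} [Nonempty X] (p : X → X → ℝ) (hp : IsPartialMetric p)
    (I : Set (Set ℕ)) (hI : IsAdmissibleIdeal I)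
    (r : ℝ) (hr : 0 ≤ r) (a b : ℕ → X)
    (hab : Filter.Tendsto (fun n => p (a n) (b n)) Filter.atTop (nhds 0))
    (haa : Filter.Tendsto (fun n => p (a n) (a n)) Filter.atTop (nhds 0))
    (x₀ : X) (hb : RoughIdealConv I p b r x₀) :
    RoughIdealConv I p a r x₀ := by
  intro ε hε
  obtain ⟨N, hN⟩ := (Metric.tendsto_atTop.mp hab) (ε/2) (by linarith)
  have hsub : {n : ℕ | r + ε ≤ |p (a n) x₀ - p x₀ x₀|} ⊆
      {n : ℕ | r + ε/2 ≤ |p (b n) x₀ - p x₀ x₀|} ∪ {n : ℕ | n < N} := by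
    intro n hn
    by_cases hnN : n < N
    · exact Or.inr hnN
    · left
      push_neg at hnN
      have h1 := hN n hnN
      rw [Real.dist_eq, sub_zero] at h1
      have hab' : |p (a n) (b n)| < ε/2 := h1
      have hnn : 0 ≤ p (a n) (b n) := le_trans (hp.self_nonneg _) (hp.self_le _ _)
      have hdiff : |p (a n) x₀ - p (b n) x₀| ≤ p (a n) (b n) := by
        rw [abs_le]
        constructor
        · have t1 := hp.triangle (b n) x₀ (a n)
          have t2 := hp.symm (b n) (a n)
          have t3 := hp.self_nonneg (a n)
          have t4 := hp.symm (a n) (b n)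
          linarith
        · have t1 := hp.triangle (a n) x₀ (b n)
          have t3 := hp.self_nonneg (b n)
          linarith
      have habs : |p (a n) (b n)| = p (a n) (b n) := abs_of_nonneg hnn
      have key : |p (a n) x₀ - p x₀ x₀| ≤ |p (b n) x₀ - p x₀ x₀| + p (a n) (b n) := by
        calc |p (a n) x₀ - p x₀ x₀|
            = |(p (a n) x₀ - p (b n) x₀) + (p (b n) x₀ - p x₀ x₀)| := by ring_nf
          _ ≤ |p (a n) x₀ - p (b n) x₀| + |p (b n) x₀ - p x₀ x₀| := abs_add_le _ _
          _ ≤ p (a n) (b n) + |p (b n) x₀ - p x₀ x₀| := by linarith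
          _ = _ := by ring
      have hn' : r + ε ≤ |p (a n) x₀ - p x₀ x₀| := hn
      simp only [Set.mem_setOf_eq]
      linarith [habs ▸ hab']
  exact hI.subset_mem _ _
    (hI.union_mem _ _ (hb (ε/2) (by linarith))
      (lt_mem_ideal hI N)) hsub
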